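/- (Proposition 2.) In the spectral mixed state ρ = Σ_l λ_lρ_l, the difference between skew and Helstrom information is I_WY − I_H = γ, where γ = −4·Σ_l Σ_{k≠l} [ (λ_l − √(λ_lλ_k))·trace(ρ_l'ρ_k') + Σ_z (λ_l(λ_k−λ_l)λ_z/(λ_l+λ_k)²)·trace(ρ_lρ_k'ρ_z') ], with I_WY and I_H given by their spectral formulas. -/

import Mathlib

open Matrix Finset

theorem stmt18 {n : ℕ} (lam : Fin n → ℝ → ℝ) (lam' : Fin n → ℝ)
    (ρ : Fin n → ℝ → Matrix (Fin n) (Fin n) ℂ)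
    (D : Fin n → Matrix (Fin n) (Fin n) ℂ) (θ : ℝ)
    (hpos : ∀ l t, 0 < lam l t)
    (hsum1 : ∀ t, ∑ l, lam l t = 1)
    (hherm : ∀ l t, (ρ l t).IsHermitian)
    (horth : ∀ l k t, ρ l t * ρ k t = if l = k then ρ l t else 0)
    (hsumI : ∀ t, ∑ l, ρ l t = 1)
    (hdlam : ∀ l, HasDerivAt (lam l) (lam' l) θ)
    (hdρ : ∀ l i j, HasDerivAt (fun t => ρ l t i j) (D l i j) θ) :
    let IWY : ℂ :=
      ∑ l, (lam l θ : ℂ) * (4 * Matrix.trace (D l * D l))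
        + ∑ l, ((lam' l ^ 2 / lam l θ : ℝ) : ℂ)
        + 4 * ∑ l, ∑ k ∈ Finset.univ.erase l,
            (Real.sqrt (lam l θ * lam k θ) : ℂ) * Matrix.trace (D l * D k)
    let IH : ℂ :=
      ∑ l, ((lam' l ^ 2 / lam l θ : ℝ) : ℂ)
        + ∑ l, ∑ k ∈ Finset.univ.erase l, ∑ z,
            ((4 * lam l θ * (lam k θ - lam l θ) * lam z θ
              / (lam l θ + lam k θ) ^ 2 : ℝ) : ℂ)
            * Matrix.trace (ρ l θ * D k * D z)
    let γ : ℂ :=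
      -4 * ∑ l, ∑ k ∈ Finset.univ.erase l,
        (((lam l θ - Real.sqrt (lam l θ * lam k θ) : ℝ) : ℂ)
            * Matrix.trace (D l * D k)
          + ∑ z, ((lam l θ * (lam k θ - lam l θ) * lam z θ
              / (lam l θ + lam k θ) ^ 2 : ℝ) : ℂ)
            * Matrix.trace (ρ l θ * D k * D z))
    IWY - IH = γ := by
  intro IWY IH γ
  have hD0 : (∑ k, D k) = 0 := by
    ext i j
    have h1 : HasDerivAt (fun t => ∑ k, ρ k t i j) (∑ k, D k i j) θ :=
      HasDerivAt.fun_sum (fun k _ => hdρ k i j)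
    have h2 : (fun t => ∑ k, ρ k t i j) = fun _ => (1 : Matrix (Fin n) (Fin n) ℂ) i j := by
      funext t
      rw [← Matrix.sum_apply i j Finset.univ (fun k => ρ k t), hsumI t]
    rw [h2] at h1
    have := h1.unique (hasDerivAt_const _ _)
    simpa [Matrix.sum_apply] using this
  have htr : ∀ l, Matrix.trace (D l * D l)
      = -∑ k ∈ Finset.univ.erase l, Matrix.trace (D l * D k) := by
    intro l
    have hz : ∑ k, Matrix.trace (D l * D k) = 0 := by
      rw [← Matrix.trace_sum, ← Finset.mul_sum, hD0, mul_zero, Matrix.trace_zero]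
    have := Finset.sum_erase_add Finset.univ (fun k => Matrix.trace (D l * D k)) (Finset.mem_univ l)
    rw [hz] at this
    linear_combination this
  simp only [IWY, IH, γ, htr]
  rw [← sub_eq_zero]
  simp only [Finset.mul_sum, ← Finset.sum_neg_distrib, ← Finset.sum_add_distrib,
    ← Finset.sum_sub_distrib, neg_mul]
  apply Finset.sum_eq_zero
  intro l _
  have h : ∑ i ∈ Finset.univ.erase l,
      ((lam l θ : ℂ) * (4 * -(D l * D i).trace)
        + 4 * ((Real.sqrt (lam l θ * lam i θ) : ℂ) * (D l * D i).trace)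
        - (∑ z, ((4 * lam l θ * (lam i θ - lam l θ) * lam z θ
              / (lam l θ + lam i θ) ^ 2 : ℝ) : ℂ) * (ρ l θ * D i * D z).trace)
        - -(4 * (((lam l θ - Real.sqrt (lam l θ * lam i θ) : ℝ) : ℂ) * (D l * D i).trace
            + ∑ z, ((lam l θ * (lam i θ - lam l θ) * lam z θ
                / (lam l θ + lam i θ) ^ 2 : ℝ) : ℂ) * (ρ l θ * D i * D z).trace))) = 0 := by
    apply Finset.sum_eq_zero
    intro i _
    have hzz : ∑ z, ((4 * lam l θ * (lam i θ - lam l θ) * lam z θ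
          / (lam l θ + lam i θ) ^ 2 : ℝ) : ℂ) * (ρ l θ * D i * D z).trace
        = 4 * ∑ z, ((lam l θ * (lam i θ - lam l θ) * lam z θ
          / (lam l θ + lam i θ) ^ 2 : ℝ) : ℂ) * (ρ l θ * D i * D z).trace := by
      rw [Finset.mul_sum]
      refine Finset.sum_congr rfl fun z _ => ?_
      push_cast
      ring
    rw [hzz]
    push_cast
    ring
  simp only [Finset.sum_sub_distrib, Finset.sum_add_distrib] at h
  linear_combination h
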